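/- For an undirected tree T on n vertices, the number of DAGs Markov equivalent to any fixed v-structure-free orientation of T equals n, and the graph on these DAGs with edges between DAGs at structural Hamming distance 1 is isomorphic to T itself. -/

import Mathlib

open SimpleGraph Walk


/-- Boolean-valued orientation of the edges of `G`. -/
def IsOrientationB {V : Type} (G : SimpleGraph V) (D : V → V → Bool) : Prop :=
  (∀ u v, D u v = true → G.Adj u v) ∧
  (∀ u v, G.Adj u v → (D u v = true ↔ D v u = false))

/-- No v-structure `a → c ← b` with `a, b` nonadjacent. -/
def NoVStructureB {V : Type} (G : SimpleGraph V) (D : V → V → Bool) : Prop :=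
  ¬ ∃ a b c : V, a ≠ b ∧ ¬ G.Adj a b ∧ D a c = true ∧ D b c = true

/-- Structural Hamming distance between two orientations of the same skeleton:
the number of edges oriented differently. -/
noncomputable def shd {V : Type} (D₁ D₂ : V → V → Bool) : ℕ :=
  Set.ncard {p : V × V | D₁ p.1 p.2 = true ∧ D₂ p.1 p.2 = false}


section Aux

variable {V : Type} [Fintype V] [DecidableEq V] {T : SimpleGraph V}

lemma tree_path_length (hT : T.IsTree) {a b : V} {p : T.Walk a b} (hp : p.IsPath) :
    p.length = T.dist a b := by
  obtain ⟨q, hq, hql⟩ := hT.isConnected.exists_path_of_dist a b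
  have h := hT.IsAcyclic.path_unique ⟨p, hp⟩ ⟨q, hq⟩
  rw [Subtype.ext_iff] at h
  rw [show p = q from h]; exact hql

lemma tree_dist_split (hT : T.IsTree) {a b x : V} {p : T.Walk a b} (hp : p.IsPath)
    (hx : x ∈ p.support) : T.dist a x + T.dist x b = T.dist a b := by
  have h1 : T.dist a x ≤ (p.takeUntil x hx).length := dist_le _
  have h2 : T.dist x b ≤ (p.dropUntil x hx).length := dist_le _
  have h3 : (p.takeUntil x hx).length + (p.dropUntil x hx).length = p.length := by
    have h := congrArg Walk.length (p.take_spec hx)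
    rwa [Walk.length_append] at h
  have h4 := tree_path_length hT hp
  have h5 := hT.isConnected.dist_triangle (u := a) (v := x) (w := b)
  omega

lemma dist_getVert_le (hT : T.IsTree) {a b : V} (p : T.Walk a b) (i : ℕ) :
    T.dist a (p.getVert i) ≤ i := by
  induction p generalizing i with
  | nil =>
    rw [Walk.getVert_of_length_le _ (by simp)]
    simp [SimpleGraph.dist_self]
  | cons h q ih =>
    rename_i x y z
    cases i with
    | zero => simp
    | succ n =>
      rw [Walk.getVert_cons_succ]
      have t1 : T.dist x (q.getVert n) ≤ T.dist x y + T.dist y (q.getVert n) :=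
        hT.isConnected.dist_triangle
      have t2 : T.dist x y = 1 := dist_eq_one_iff_adj.2 h
      have t3 := ih n
      omega

/-- In a tree, distances to the endpoints of an edge differ by exactly one. -/
lemma tree_adj_dist (hT : T.IsTree) {u v : V} (h : T.Adj u v) (r : V) :
    T.dist r v = T.dist r u + 1 ∨ T.dist r u = T.dist r v + 1 := by
  obtain ⟨p, hp, hpl⟩ := hT.isConnected.exists_path_of_dist r u
  by_cases hv : v ∈ p.support
  · right
    have h1 := tree_dist_split hT hp hv
    have h2 : T.dist v u = 1 := dist_eq_one_iff_adj.2 h.symm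
    omega
  · left
    have hq : (p.concat h).IsPath := by
      rw [Walk.concat_eq_append]
      rw [Walk.isPath_def, Walk.support_append, List.nodup_append]
      refine ⟨hp.support_nodup, by simp [h.ne'], ?_⟩
      intro x hx y hx' hxy
      simp only [Walk.support_cons, Walk.support_nil, List.tail_cons,
        List.mem_singleton] at hx'
      rw [hxy, hx'] at hx
      exact hv hx
    have := tree_path_length hT hq
    rw [Walk.length_concat, hpl] at this
    omega

lemma tree_no_triangle (hT : T.IsTree) {a b c : V} (hac : T.Adj a c) (hbc : T.Adj b c)
    (hab : a ≠ b) : ¬ T.Adj a b := by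
  intro h
  have h1 : (Walk.cons h Walk.nil : T.Walk a b).IsPath := by
    simp [Walk.isPath_def, hab]
  have h2 : (Walk.cons hac (Walk.cons hbc.symm Walk.nil) : T.Walk a b).IsPath := by
    simp [Walk.isPath_def, hab, hac.ne, hbc.ne']
  have e1 := tree_path_length hT h1
  have e2 := tree_path_length hT h2
  simp only [Walk.length_cons, Walk.length_nil] at e1 e2
  omega

/-- In a tree, a vertex has a unique neighbour strictly closer to any root. -/
lemma tree_parent_unique (hT : T.IsTree) {r c a b : V} (hac : T.Adj a c) (hbc : T.Adj b c)
    (h1 : T.dist r a < T.dist r c) (h2 : T.dist r b < T.dist r c) : a = b := by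
  have ha : T.dist r c = T.dist r a + 1 := by
    rcases tree_adj_dist hT hac r with h | h <;> omega
  have hb : T.dist r c = T.dist r b + 1 := by
    rcases tree_adj_dist hT hbc r with h | h <;> omega
  obtain ⟨pa, hpa, hpal⟩ := hT.isConnected.exists_path_of_dist r a
  obtain ⟨pb, hpb, hpbl⟩ := hT.isConnected.exists_path_of_dist r b
  have hqa : (pa.concat hac).IsPath := by
    apply Walk.isPath_of_length_eq_dist
    rw [Walk.length_concat, hpal]; omega
  have hqb : (pb.concat hbc).IsPath := by
    apply Walk.isPath_of_length_eq_dist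
    rw [Walk.length_concat, hpbl]; omega
  have heq : pa.concat hac = pb.concat hbc :=
    congrArg Subtype.val (hT.IsAcyclic.path_unique ⟨pa.concat hac, hqa⟩ ⟨pb.concat hbc, hqb⟩)
  have hga : (pa.concat hac).getVert pa.length = a := by
    rw [Walk.concat_eq_append, Walk.getVert_append]
    simp
  have hgb : (pb.concat hbc).getVert pb.length = b := by
    rw [Walk.concat_eq_append, Walk.getVert_append]
    simp
  have hlen : pa.length = pb.length := by rw [hpal, hpbl]; omega
  rw [← hga, ← hgb, ← hlen, heq]

end Aux

section Orient

variable {V : Type} [Fintype V] [DecidableEq V]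

/-- The orientation of a graph away from the root `r`. -/
noncomputable def orient (T : SimpleGraph V) (r : V) : V → V → Bool :=
  fun u v => @decide (T.Adj u v ∧ T.dist r u < T.dist r v) (Classical.propDecidable _)

lemma orient_eq_true {T : SimpleGraph V} {r u v : V} :
    orient T r u v = true ↔ T.Adj u v ∧ T.dist r u < T.dist r v := by
  simp [orient]

lemma orient_eq_false {T : SimpleGraph V} {r u v : V} :
    orient T r u v = false ↔ ¬ (T.Adj u v ∧ T.dist r u < T.dist r v) := by
  rw [← Bool.not_eq_true, orient_eq_true]

variable {T : SimpleGraph V}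

lemma orient_isOrientationB (hT : T.IsTree) (r : V) : IsOrientationB T (orient T r) := by
  refine ⟨fun u v h => (orient_eq_true.1 h).1, fun u v hadj => ?_⟩
  rw [orient_eq_true, orient_eq_false]
  rcases tree_adj_dist hT hadj r with h | h
  · constructor
    · rintro - ⟨-, hlt⟩; omega
    · intro _; exact ⟨hadj, by omega⟩
  · constructor
    · rintro ⟨-, hlt⟩ -; omega
    · intro hn; exfalso; exact hn ⟨hadj.symm, by omega⟩

lemma orient_noVStructureB (hT : T.IsTree) (r : V) : NoVStructureB T (orient T r) := by
  rintro ⟨a, b, c, hab, hnadj, h1, h2⟩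
  rw [orient_eq_true] at h1 h2
  exact hab (tree_parent_unique hT h1.1 h2.1 h1.2 h2.2)

lemma orient_self_false (T : SimpleGraph V) (r u : V) : orient T r u r = false := by
  rw [orient_eq_false]
  rintro ⟨-, hlt⟩
  simp [SimpleGraph.dist_self] at hlt

lemma exists_parent (hT : T.IsTree) {r u : V} (h : r ≠ u) :
    ∃ w, T.Adj w u ∧ T.dist r w < T.dist r u := by
  obtain ⟨p, hp, hpl⟩ := hT.isConnected.exists_path_of_dist r u
  have hpos : 0 < T.dist r u := hT.isConnected.pos_dist_of_ne h
  refine ⟨p.getVert (p.length - 1), ?_, ?_⟩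
  · have hadj := p.adj_getVert_succ (i := p.length - 1) (by omega)
    rw [show p.length - 1 + 1 = p.length by omega, p.getVert_length] at hadj
    exact hadj
  · have := dist_getVert_le hT p (p.length - 1)
    omega

lemma orient_injective (hT : T.IsTree) {r s : V} (h : orient T r = orient T s) : r = s := by
  by_contra hrs
  obtain ⟨w, hwadj, hwlt⟩ := exists_parent hT (hrs : r ≠ s)
  have h1 : orient T r w s = true := orient_eq_true.2 ⟨hwadj, hwlt⟩
  have h2 : orient T s w s = false := orient_self_false T s w
  rw [h] at h1
  rw [h1] at h2
  simp at h2

end Orient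

section Source

variable {V : Type} [Fintype V] [DecidableEq V] {T : SimpleGraph V}

lemma exists_source (hT : T.IsTree) {D' : V → V → Bool} (hD' : IsOrientationB T D')
    (hv' : NoVStructureB T D') : ∃ r : V, ∀ u, D' u r = false := by
  classical
  by_contra hno
  push_neg at hno
  simp only [Bool.ne_false_iff] at hno
  choose g hg using hno
  have hnonempty : Nonempty V := hT.isConnected.nonempty
  set F : Finset (V × V) := Finset.univ.filter (fun p => D' p.1 p.2 = true) with hF
  have hcard : F.card + 1 = Fintype.card V := by
    rw [← hT.card_edgeFinset]
    congr 1
    refine Finset.card_bij (fun p _ => Sym2.mk p.1 p.2) ?_ ?_ ?_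
    · rintro ⟨u, v⟩ hp
      simp only [hF, Finset.mem_filter] at hp
      simpa [SimpleGraph.mem_edgeFinset] using hD'.1 u v hp.2
    · rintro ⟨u, v⟩ hp ⟨u', v'⟩ hp' he
      simp only [hF, Finset.mem_filter] at hp hp'
      rw [Sym2.mk_eq_mk_iff] at he
      rcases he with he | he
      · exact he
      · exfalso
        simp only [Prod.swap_prod_mk, Prod.mk.injEq] at he
        obtain ⟨rfl, rfl⟩ := he
        have hadj := hD'.1 _ _ hp.2
        have := (hD'.2 _ _ hadj).1 hp.2
        rw [hp'.2] at this
        simp at this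
    · intro e he
      rw [SimpleGraph.mem_edgeFinset] at he
      induction e with
      | _ u v =>
        rw [SimpleGraph.mem_edgeSet] at he
        rcases Bool.eq_false_or_eq_true (D' u v) with h | h
        · exact ⟨(u, v), by simp [hF, h], rfl⟩
        · have h2 : D' v u = true := by
            rcases Bool.eq_false_or_eq_true (D' v u) with h' | h'
            · exact h'
            · exact absurd ((hD'.2 u v he).2 h') (by simp [h])
          exact ⟨(v, u), by simp [hF, h2], Sym2.eq_swap⟩
  have hle : Fintype.card V ≤ F.card := by
    have : (Finset.univ : Finset V).card ≤ F.card := by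
      apply Finset.card_le_card_of_injOn (fun r => (g r, r))
      · intro r _
        simp [hF, hg r]
      · intro a _ b _ h
        exact congrArg Prod.snd h
    simpa using this
  omega

lemma eq_orient_of_source (hT : T.IsTree) {D' : V → V → Bool} (hD' : IsOrientationB T D')
    (hv' : NoVStructureB T D') {r : V} (hr : ∀ u, D' u r = false) :
    D' = orient T r := by
  have key : ∀ n v u, T.dist r v = n → T.Adj u v → T.dist r u < T.dist r v →
      D' u v = true := by
    intro n
    induction n using Nat.strong_induction_on with
    | _ n ih =>
      intro v u hn hadj hlt
      by_contra hfalse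
      have hDvu : D' v u = true := by
        rcases Bool.eq_false_or_eq_true (D' v u) with h | h
        · exact h
        · exact absurd ((hD'.2 u v hadj).2 h) hfalse
      rcases eq_or_ne u r with rfl | hur
      · rw [hr v] at hDvu; simp at hDvu
      · have hpos : 0 < T.dist r u := hT.isConnected.pos_dist_of_ne (Ne.symm hur)
        obtain ⟨w, hwadj, hwlt⟩ := exists_parent hT (Ne.symm hur)
        have hDwu : D' w u = true :=
          ih (T.dist r u) (by omega) u w rfl hwadj hwlt
        have hwv : w ≠ v := by
          intro h; rw [h] at hwlt; omega
        have hnadj : ¬ T.Adj w v := tree_no_triangle hT hwadj hadj.symm hwv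
        exact hv' ⟨w, v, u, hwv, hnadj, hDwu, hDvu⟩
  funext u v
  have main : D' u v = true ↔ orient T r u v = true := by
    rw [orient_eq_true]
    constructor
    · intro h
      have hadj := hD'.1 u v h
      refine ⟨hadj, ?_⟩
      rcases tree_adj_dist hT hadj r with hd | hd
      · omega
      · exfalso
        have h1 := key (T.dist r u) u v rfl hadj.symm (by omega)
        have h2 := (hD'.2 u v hadj).1 h
        rw [h1] at h2
        simp at h2
    · rintro ⟨hadj, hlt⟩
      exact key (T.dist r v) v u rfl hadj hlt
  rcases Bool.eq_false_or_eq_true (orient T r u v) with h | h <;>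
    rcases Bool.eq_false_or_eq_true (D' u v) with h' | h' <;> simp_all

end Source

section SHD

variable {V : Type} [Fintype V] [DecidableEq V] {T : SimpleGraph V}

lemma getVert_dist (hT : T.IsTree) {r s : V} {p : T.Walk r s} (hp : p.IsPath)
    {i : ℕ} (hi : i ≤ p.length) :
    T.dist r (p.getVert i) = i ∧ T.dist s (p.getVert i) = p.length - i := by
  have h1 : T.dist r (p.getVert i) ≤ i := dist_getVert_le hT p i
  have h2 : T.dist s (p.getVert i) ≤ p.length - i := by
    have h := dist_getVert_le hT p.reverse (p.length - i)
    rwa [Walk.getVert_reverse, show p.length - (p.length - i) = i from by omega] at h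
  have hmem : p.getVert i ∈ p.support := Walk.mem_support_iff_exists_getVert.2 ⟨i, rfl, hi⟩
  have h3 := tree_dist_split hT hp hmem
  have h4 : T.dist (p.getVert i) s = T.dist s (p.getVert i) := SimpleGraph.dist_comm
  have h0 := tree_path_length hT hp
  constructor <;> omega

lemma shd_orient (hT : T.IsTree) {r s : V} (hrs : r ≠ s) :
    shd (orient T r) (orient T s) = T.dist r s := by
  classical
  obtain ⟨p, hp, hpl⟩ := hT.isConnected.exists_path_of_dist r s
  set d := T.dist r s with hd
  have hdpos : 0 < d := hT.isConnected.pos_dist_of_ne hrs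
  have hset : {q : V × V | orient T r q.1 q.2 = true ∧ orient T s q.1 q.2 = false} =
      (fun i : ℕ => (p.getVert i, p.getVert (i + 1))) '' Set.Iio d := by
    ext ⟨u, v⟩
    simp only [Set.mem_setOf_eq, Set.mem_image, Set.mem_Iio]
    constructor
    · rintro ⟨h1, h2⟩
      rw [orient_eq_true] at h1
      rw [orient_eq_false] at h2
      obtain ⟨hadj, hrlt⟩ := h1
      have hslt : T.dist s v < T.dist s u := by
        rcases tree_adj_dist hT hadj s with h | h
        · exfalso; exact h2 ⟨hadj, by omega⟩
        · omega
      have hrv : T.dist r v = T.dist r u + 1 := by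
        rcases tree_adj_dist hT hadj r with h | h <;> omega
      have hsu : T.dist s u = T.dist s v + 1 := by
        rcases tree_adj_dist hT hadj s with h | h <;> omega
      obtain ⟨pru, hpru, hprul⟩ := hT.isConnected.exists_path_of_dist r u
      obtain ⟨pvs, hpvs, hpvsl⟩ := hT.isConnected.exists_path_of_dist v s
      have e1 : T.dist u s = T.dist v s + 1 := by
        rw [SimpleGraph.dist_comm (u := u), SimpleGraph.dist_comm (u := v)]
        exact hsu
      have hprv : (pru.concat hadj).IsPath := by
        apply Walk.isPath_of_length_eq_dist
        rw [Walk.length_concat, hprul]; omega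
      have hpus : (Walk.cons hadj pvs).IsPath := by
        apply Walk.isPath_of_length_eq_dist
        rw [Walk.length_cons, hpvsl]; omega
      have hdisj : ∀ x, x ∈ pru.support → x ∈ pvs.support → False := by
        intro x hx1 hx2
        have s1 := tree_dist_split hT hpru hx1
        have s2 := tree_dist_split hT hprv (by
          rw [Walk.concat_eq_append]
          exact Walk.subset_support_append_left _ _ hx1)
        have s3 := tree_dist_split hT hpvs hx2
        have s4 := tree_dist_split hT hpus (by
          rw [Walk.support_cons]
          exact List.mem_cons_of_mem _ hx2)
        have c1 : T.dist x u = T.dist u x := SimpleGraph.dist_comm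
        have c2 : T.dist x v = T.dist v x := SimpleGraph.dist_comm
        omega
      set W : T.Walk r s := pru.append (Walk.cons hadj pvs) with hW
      have hWpath : W.IsPath := by
        rw [Walk.isPath_def, hW, Walk.support_append, Walk.support_cons, List.tail_cons]
        exact List.Nodup.append hpru.support_nodup hpvs.support_nodup hdisj
      have hWlen : W.length = d := tree_path_length hT hWpath
      have hWlen2 : W.length = pru.length + (pvs.length + 1) := by
        rw [hW, Walk.length_append, Walk.length_cons]
      have hWp : W = p :=
        congrArg Subtype.val (hT.IsAcyclic.path_unique ⟨W, hWpath⟩ ⟨p, hp⟩)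
      refine ⟨pru.length, by omega, ?_⟩
      have g1 : W.getVert pru.length = u := by
        rw [hW, Walk.getVert_append]
        simp
      have g2 : W.getVert (pru.length + 1) = v := by
        rw [hW, Walk.getVert_append]
        simp [Walk.getVert_cons_succ]
      rw [← hWp, g1, g2]
    · rintro ⟨i, hi, heq⟩
      have hlen : p.length = d := hpl
      have hadj := p.adj_getVert_succ (i := i) (by omega)
      have e_i := getVert_dist hT hp (i := i) (by omega)
      have e_i1 := getVert_dist hT hp (i := i + 1) (by omega)
      injection heq with hu hv
      subst hu; subst hv
      constructor
      · rw [orient_eq_true]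
        exact ⟨hadj, by omega⟩
      · rw [orient_eq_false]
        rintro ⟨-, hlt⟩
        omega
  rw [shd, hset, Set.ncard_image_of_injOn, ← Finset.coe_Iio, Set.ncard_coe_finset,
    Nat.card_Iio]
  intro i hi j hj hij
  simp only [Set.mem_Iio] at hi hj
  have h1 : p.getVert i = p.getVert j := congrArg Prod.fst hij
  have e_i := getVert_dist hT hp (i := i) (by omega)
  have e_j := getVert_dist hT hp (i := j) (by omega)
  rw [h1] at e_i
  omega

end SHD

/-- For a tree `T` on `n` vertices, the Markov equivalence class of any
v-structure-free orientation of `T` (i.e. the set of all v-structure-free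
orientations of `T`) has exactly `n` members, and the graph on these members
with edges between orientations at structural Hamming distance 1 is isomorphic
to `T` itself. -/
theorem stmt12 {V : Type} [Fintype V] [DecidableEq V] (T : SimpleGraph V)
    (hT : T.IsTree) (D : V → V → Bool)
    (hD : IsOrientationB T D) (hv : NoVStructureB T D) :
    Nat.card {D' : V → V → Bool // IsOrientationB T D' ∧ NoVStructureB T D'} =
      Fintype.card V ∧
    ∃ f : {D' : V → V → Bool // IsOrientationB T D' ∧ NoVStructureB T D'} ≃ V,
      ∀ D₁ D₂ : {D' : V → V → Bool // IsOrientationB T D' ∧ NoVStructureB T D'},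
        shd D₁.1 D₂.1 = 1 ↔ T.Adj (f D₁) (f D₂) := by
  classical
  have hbij : Function.Bijective
      (fun r : V => (⟨orient T r, orient_isOrientationB hT r, orient_noVStructureB hT r⟩ :
        {D' : V → V → Bool // IsOrientationB T D' ∧ NoVStructureB T D'})) := by
    constructor
    · intro a b hab
      exact orient_injective hT (congrArg Subtype.val hab)
    · rintro ⟨D', hD', hv'⟩
      obtain ⟨r, hr⟩ := exists_source hT hD' hv'
      exact ⟨r, Subtype.ext (eq_orient_of_source hT hD' hv' hr).symm⟩
  let e := Equiv.ofBijective _ hbij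
  refine ⟨?_, e.symm, ?_⟩
  · rw [Nat.card_congr e.symm, Nat.card_eq_fintype_card]
  · intro D₁ D₂
    have h1 : D₁.1 = orient T (e.symm D₁) :=
      congrArg Subtype.val (e.apply_symm_apply D₁).symm
    have h2 : D₂.1 = orient T (e.symm D₂) :=
      congrArg Subtype.val (e.apply_symm_apply D₂).symm
    rw [h1, h2]
    rcases eq_or_ne (e.symm D₁) (e.symm D₂) with heq | hab
    · rw [heq]
      constructor
      · intro h
        exfalso
        have hz : shd (orient T (e.symm D₂)) (orient T (e.symm D₂)) = 0 := by
          rw [shd]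
          convert Set.ncard_empty (V × V)
          ext ⟨u, v⟩
          simp only [Set.mem_setOf_eq, Set.mem_empty_iff_false, iff_false]
          rintro ⟨ha, hb⟩
          rw [ha] at hb
          simp at hb
        omega
      · intro h
        exact absurd rfl h.ne
    · rw [shd_orient hT hab]
      exact dist_eq_one_iff_adj
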